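/- Let k = (1/2) ( √π Γ(1/4) / Γ(3/4) )², where Γ denotes the Gamma function. If X : [0,1] → ℝ is twice differentiable and satisfies the pendulum equation X''(t) = −k sin(X(t)) for all t ∈ [0,1], with initial conditions X(0) = −π/2 and X'(0) = 0, then X(1) = π/2 and X'(1) = 0. -/

import Mathlib

open Set Real

open MeasureTheory intervalIntegral Filter Topology

lemma pend_gamma_quarter_pos : 0 < Real.Gamma (1/4) := Real.Gamma_pos_of_pos (by norm_num)

lemma pend_reflection : Real.Gamma (1/4) * Real.Gamma (3/4) = π * Real.sqrt 2 := by
  have h := Real.Gamma_mul_Gamma_one_sub (1/4)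
  norm_num at h
  rw [h, show π * (1/4) = π/4 by ring, Real.sin_pi_div_four]
  rw [div_div_eq_mul_div, div_eq_iff (by positivity)]
  have : Real.sqrt 2 * Real.sqrt 2 = 2 := Real.mul_self_sqrt (by norm_num)
  nlinarith [Real.pi_pos]

lemma pend_beta_integrable :
    IntegrableOn (fun x : ℝ => x ^ (-(3/4):ℝ) * (1-x) ^ (-(3/4):ℝ)) (Ioo (0:ℝ) 1) := by
  have hc := Complex.betaIntegral_convergent (u := 1/4) (v := 1/4) (by norm_num) (by norm_num)
  have hn := hc.norm
  have h1 : IntegrableOn (fun x : ℝ => ‖(x:ℂ) ^ ((1:ℂ)/4 - 1) * (1 - (x:ℂ)) ^ ((1:ℂ)/4 - 1)‖)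
      (Ioo (0:ℝ) 1) := by
    have := (intervalIntegrable_iff_integrableOn_Ioo_of_le (by norm_num : (0:ℝ) ≤ 1)).mp hn
    exact this
  refine (h1.congr_fun ?_ measurableSet_Ioo)
  intro x hx
  have hx0 : (0:ℝ) < x := hx.1
  have hx1 : (0:ℝ) < 1 - x := by linarith [hx.2]
  have e1 : ‖(x:ℂ) ^ ((1:ℂ)/4 - 1)‖ = x ^ (-(3/4):ℝ) := by
    rw [Complex.norm_cpow_eq_rpow_re_of_pos hx0]
    norm_num
  have e2 : ‖(1 - (x:ℂ)) ^ ((1:ℂ)/4 - 1)‖ = (1-x) ^ (-(3/4):ℝ) := by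
    rw [show (1 - (x:ℂ)) = (((1-x):ℝ):ℂ) by push_cast; ring]
    rw [Complex.norm_cpow_eq_rpow_re_of_pos hx1]
    norm_num
  simp only [norm_mul, e1, e2]

lemma pend_beta_value :
    ∫ x in Ioo (0:ℝ) 1, x ^ (-(3/4):ℝ) * (1-x) ^ (-(3/4):ℝ)
      = Real.Gamma (1/4) ^ 2 / Real.sqrt π := by
  have hb := Complex.Gamma_mul_Gamma_eq_betaIntegral (s := 1/4) (t := 1/4)
      (by norm_num) (by norm_num)
  have hbeta : Complex.betaIntegral (1/4) (1/4)
      = ((∫ x in Ioo (0:ℝ) 1, x ^ (-(3/4):ℝ) * (1-x) ^ (-(3/4):ℝ) : ℝ) : ℂ) := by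
    rw [Complex.betaIntegral]
    rw [intervalIntegral.integral_of_le (by norm_num : (0:ℝ) ≤ 1)]
    rw [integral_Ioc_eq_integral_Ioo]
    rw [show ((∫ x in Ioo (0:ℝ) 1, x ^ (-(3/4):ℝ) * (1-x) ^ (-(3/4):ℝ) : ℝ) : ℂ)
      = ∫ x in Ioo (0:ℝ) 1, ((x ^ (-(3/4):ℝ) * (1-x) ^ (-(3/4):ℝ) : ℝ) : ℂ)
      from (integral_ofReal (𝕜 := ℂ)).symm]
    refine setIntegral_congr_fun measurableSet_Ioo ?_
    intro x hx
    have hx0 : (0:ℝ) ≤ x := hx.1.le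
    have hx1 : (0:ℝ) ≤ 1 - x := by linarith [hx.2.le]
    push_cast
    rw [Complex.ofReal_cpow hx0, Complex.ofReal_cpow hx1]
    push_cast
    norm_num
  rw [hbeta] at hb
  have h12 : Complex.Gamma ((1:ℂ)/4 + 1/4) = (Real.sqrt π : ℂ) := by
    rw [show (1:ℂ)/4 + 1/4 = ((1/2 : ℝ) : ℂ) by norm_num]
    rw [Complex.Gamma_ofReal, Real.Gamma_one_half_eq]
  have h14 : Complex.Gamma ((1:ℂ)/4) = (Real.Gamma (1/4) : ℂ) := by
    rw [show (1:ℂ)/4 = ((1/4 : ℝ) : ℂ) by norm_num]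
    rw [Complex.Gamma_ofReal]
  rw [h12, h14] at hb
  have hsp : Real.sqrt π ≠ 0 := by positivity
  have : (Real.Gamma (1/4) * Real.Gamma (1/4) : ℝ)
      = Real.sqrt π * ∫ x in Ioo (0:ℝ) 1, x ^ (-(3/4):ℝ) * (1-x) ^ (-(3/4):ℝ) := by
    exact_mod_cast hb
  rw [eq_div_iff hsp]
  nlinarith [this]

lemma pend_image_affine : (fun t : ℝ => 2*t - 1) '' Ioo 0 1 = Ioo (-1 : ℝ) 1 := by
  ext y
  constructor
  · rintro ⟨t, ⟨h1, h2⟩, rfl⟩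
    refine mem_Ioo.2 ⟨?_, ?_⟩ <;> dsimp <;> linarith
  · rintro ⟨h1, h2⟩
    exact ⟨(y+1)/2, ⟨by linarith, by linarith⟩, by ring⟩

lemma pend_affine_deriv : ∀ t ∈ Ioo (0:ℝ) 1,
    HasDerivWithinAt (fun t : ℝ => 2*t - 1) 2 (Ioo (0:ℝ) 1) t := by
  intro t _
  simpa using (((hasDerivAt_id t).const_mul (2:ℝ)).sub_const 1).hasDerivWithinAt

lemma pend_affine_inj : InjOn (fun t : ℝ => 2*t - 1) (Ioo (0:ℝ) 1) := by
  intro a _ b _ hab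
  dsimp at hab
  linarith

lemma pend_aux1 : ∀ t ∈ Ioo (0:ℝ) 1, (1 - (2*t-1)^2) ^ (-(3/4):ℝ)
    = (4:ℝ) ^ (-(3/4):ℝ) * (t ^ (-(3/4):ℝ) * (1-t) ^ (-(3/4):ℝ)) := by
  intro t ht
  have h4 : (1 - (2*t-1)^2) = 4 * (t*(1-t)) := by ring
  rw [h4, Real.mul_rpow (by norm_num) (by nlinarith [ht.1, ht.2]),
    Real.mul_rpow ht.1.le (by linarith [ht.2])]

lemma pend_g_int : IntegrableOn (fun y : ℝ => (1 - y^2) ^ (-(3/4):ℝ)) (Ioo (-1:ℝ) 1) := by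
  rw [← pend_image_affine,
    integrableOn_image_iff_integrableOn_abs_deriv_smul measurableSet_Ioo
      pend_affine_deriv pend_affine_inj]
  refine MeasureTheory.IntegrableOn.congr_fun
    (pend_beta_integrable.const_mul ((2:ℝ) * (4:ℝ) ^ (-(3/4):ℝ))) ?_ measurableSet_Ioo
  intro t ht
  simp only [smul_eq_mul]
  rw [pend_aux1 t ht]
  rw [abs_of_pos (by norm_num : (0:ℝ) < 2)]
  ring

lemma pend_pow_aux : (2:ℝ) * (4:ℝ) ^ (-(3/4):ℝ) = (2:ℝ) ^ (-(1/2):ℝ) := by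
  have h4 : (4:ℝ) ^ (-(3/4):ℝ) = (2:ℝ) ^ (-(3/2):ℝ) := by
    rw [show (4:ℝ) = (2:ℝ) ^ ((2:ℕ):ℝ) by rw [Real.rpow_natCast]; norm_num,
      ← Real.rpow_mul (by norm_num : (0:ℝ) ≤ 2)]
    norm_num
  rw [h4, show (2:ℝ) * (2:ℝ) ^ (-(3/2):ℝ) = (2:ℝ) ^ (1 + (-(3/2)):ℝ) by
    rw [Real.rpow_add (by norm_num : (0:ℝ) < 2), Real.rpow_one]]
  norm_num

lemma pend_g_value : ∫ y in Ioo (-1:ℝ) 1, (1 - y^2) ^ (-(3/4):ℝ)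
    = (2:ℝ) ^ (-(1/2):ℝ) * (Real.Gamma (1/4) ^ 2 / Real.sqrt π) := by
  rw [← pend_image_affine,
    integral_image_eq_integral_abs_deriv_smul measurableSet_Ioo
      pend_affine_deriv pend_affine_inj]
  rw [setIntegral_congr_fun (g := fun t : ℝ =>
      ((2:ℝ) * (4:ℝ) ^ (-(3/4):ℝ)) * (t ^ (-(3/4):ℝ) * (1-t) ^ (-(3/4):ℝ)))
      measurableSet_Ioo ?_]
  · rw [MeasureTheory.integral_const_mul, pend_beta_value, pend_pow_aux]
  · intro t ht
    simp only [smul_eq_mul]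
    rw [pend_aux1 t ht, abs_of_pos (by norm_num : (0:ℝ) < 2)]
    ring

lemma pend_image_sin : Real.sin '' Ioo (-(π/2)) (π/2) = Ioo (-1 : ℝ) 1 := by
  ext y
  constructor
  · rintro ⟨x, hx, rfl⟩
    have hxm : x ∈ Icc (-(π/2)) (π/2) := Ioo_subset_Icc_self hx
    constructor
    · have := Real.strictMonoOn_sin (left_mem_Icc.2 (by linarith [Real.pi_pos])) hxm hx.1
      rwa [Real.sin_neg, Real.sin_pi_div_two] at this
    · have := Real.strictMonoOn_sin hxm (right_mem_Icc.2 (by linarith [Real.pi_pos])) hx.2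
      rwa [Real.sin_pi_div_two] at this
  · rintro ⟨h1, h2⟩
    exact ⟨Real.arcsin y, ⟨Real.neg_pi_div_two_lt_arcsin.2 h1,
      Real.arcsin_lt_pi_div_two.2 h2⟩, Real.sin_arcsin h1.le h2.le⟩

lemma pend_sin_deriv : ∀ x ∈ Ioo (-(π/2)) (π/2),
    HasDerivWithinAt Real.sin (Real.cos x) (Ioo (-(π/2)) (π/2)) x :=
  fun x _ => (Real.hasDerivAt_sin x).hasDerivWithinAt

lemma pend_sin_inj : InjOn Real.sin (Ioo (-(π/2)) (π/2)) :=
  Real.injOn_sin.mono Ioo_subset_Icc_self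

lemma pend_aux2 : ∀ x ∈ Ioo (-(π/2)) (π/2),
    |Real.cos x| * (1 - Real.sin x ^ 2) ^ (-(3/4):ℝ) = Real.cos x ^ (-(1/2):ℝ) := by
  intro x hx
  have hc : 0 < Real.cos x := Real.cos_pos_of_mem_Ioo hx
  rw [abs_of_pos hc, ← Real.cos_sq' x, ← Real.rpow_natCast (Real.cos x) 2,
    ← Real.rpow_mul hc.le]
  have : Real.cos x * Real.cos x ^ (((2:ℕ):ℝ) * (-(3/4))) =
      Real.cos x ^ (1 + ((2:ℕ):ℝ) * (-(3/4))) := by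
    rw [Real.rpow_add hc, Real.rpow_one]
  rw [this]
  norm_num

lemma pend_cos_int : IntegrableOn (fun x : ℝ => Real.cos x ^ (-(1/2):ℝ))
    (Ioo (-(π/2)) (π/2)) := by
  have := (integrableOn_image_iff_integrableOn_abs_deriv_smul measurableSet_Ioo
      pend_sin_deriv pend_sin_inj (fun y : ℝ => (1 - y^2) ^ (-(3/4):ℝ))).mp
    (by rw [pend_image_sin]; exact pend_g_int)
  refine this.congr_fun ?_ measurableSet_Ioo
  intro x hx
  simp only [smul_eq_mul]
  exact pend_aux2 x hx

lemma pend_cos_value : ∫ x in Ioo (-(π/2)) (π/2), Real.cos x ^ (-(1/2):ℝ)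
    = (2:ℝ) ^ (-(1/2):ℝ) * (Real.Gamma (1/4) ^ 2 / Real.sqrt π) := by
  rw [← pend_g_value, ← pend_image_sin,
    integral_image_eq_integral_abs_deriv_smul measurableSet_Ioo pend_sin_deriv pend_sin_inj]
  refine setIntegral_congr_fun measurableSet_Ioo ?_
  intro x hx
  simp only [smul_eq_mul]
  exact (pend_aux2 x hx).symm

noncomputable def pendK : ℝ :=
  (1 / 2) * (Real.sqrt π * Real.Gamma (1 / 4) / Real.Gamma (3 / 4)) ^ 2

lemma pendK_eq : pendK = Real.Gamma (1/4) ^ 4 / (4 * π) := by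
  have hA : 0 < Real.Gamma (1/4) := pend_gamma_quarter_pos
  have hB : 0 < Real.Gamma (3/4) := Real.Gamma_pos_of_pos (by norm_num)
  have hr := pend_reflection
  have hs2 : Real.sqrt 2 ^ 2 = 2 := Real.sq_sqrt (by norm_num)
  have hsp : Real.sqrt π ^ 2 = π := Real.sq_sqrt Real.pi_pos.le
  have key : (Real.Gamma (1/4) * Real.Gamma (3/4)) ^ 2 = 2 * π ^ 2 := by
    rw [hr]; nlinarith [hs2]
  unfold pendK
  rw [div_pow, mul_pow, hsp]
  have hBne : Real.Gamma (3/4) ≠ 0 := ne_of_gt hB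
  have hpne : π ≠ 0 := ne_of_gt Real.pi_pos
  field_simp
  nlinarith [key, Real.pi_pos, sq_nonneg (Real.Gamma (1/4)), sq_nonneg (Real.Gamma (3/4))]

lemma pendK_pos : 0 < pendK := by
  rw [pendK_eq]
  have := pend_gamma_quarter_pos
  positivity

noncomputable def pendH : ℝ → ℝ := fun u => (2 * pendK * Real.cos u) ^ (-(1/2) : ℝ)

lemma pendH_eq : ∀ u ∈ Ioo (-(π/2)) (π/2),
    pendH u = (2 * pendK) ^ (-(1/2):ℝ) * Real.cos u ^ (-(1/2):ℝ) := by
  intro u hu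
  unfold pendH
  rw [Real.mul_rpow (mul_pos two_pos pendK_pos).le (Real.cos_pos_of_mem_Ioo hu).le]

lemma pendH_int : IntegrableOn pendH (Ioo (-(π/2)) (π/2)) := by
  refine MeasureTheory.IntegrableOn.congr_fun
    (pend_cos_int.const_mul ((2 * pendK) ^ (-(1/2):ℝ))) ?_ measurableSet_Ioo
  intro u hu
  exact (pendH_eq u hu).symm

lemma pendH_pos : ∀ u ∈ Ioo (-(π/2)) (π/2), 0 < pendH u := by
  intro u hu
  have := Real.cos_pos_of_mem_Ioo hu
  have h2 : 0 < 2 * pendK * Real.cos u := mul_pos (mul_pos two_pos pendK_pos) this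
  exact Real.rpow_pos_of_pos h2 _

lemma pend_sqinv {x : ℝ} (hx : 0 < x) : (x ^ 2) ^ (-(1/2):ℝ) = x⁻¹ := by
  rw [← Real.rpow_natCast x 2, ← Real.rpow_mul hx.le]
  norm_num
  exact Real.rpow_neg_one x

lemma pendH_value : ∫ u in Ioo (-(π/2)) (π/2), pendH u = 1 := by
  rw [setIntegral_congr_fun measurableSet_Ioo pendH_eq]
  rw [MeasureTheory.integral_const_mul, pend_cos_value]
  have hA : 0 < Real.Gamma (1/4) := pend_gamma_quarter_pos
  have h2K : (2 * pendK) = (Real.Gamma (1/4) ^ 2 / Real.sqrt (2*π)) ^ 2 := by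
    rw [pendK_eq, div_pow]
    rw [Real.sq_sqrt (by positivity : (0:ℝ) ≤ 2*π)]
    field_simp
    ring
  rw [h2K, pend_sqinv (div_pos (by positivity) (Real.sqrt_pos.2 (by positivity : (0:ℝ) < 2*π)))]
  rw [Real.sqrt_mul (by norm_num : (0:ℝ) ≤ 2)]
  have h12 : (2:ℝ) ^ (-(1/2):ℝ) = (Real.sqrt 2)⁻¹ := by
    rw [Real.rpow_neg (by norm_num : (0:ℝ) ≤ 2), ← Real.sqrt_eq_rpow]
  rw [h12]
  have hs2 : (0:ℝ) < Real.sqrt 2 := Real.sqrt_pos.2 (by norm_num)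
  have hsp : (0:ℝ) < Real.sqrt π := Real.sqrt_pos.2 Real.pi_pos
  rw [inv_div]
  field_simp


noncomputable def pendF : ℝ → ℝ := fun x => ∫ u in (-(π/2))..x, pendH u

lemma pend_half_pi_pos : (0:ℝ) < π/2 := by positivity

lemma pendH_int_Icc : IntegrableOn pendH (Icc (-(π/2)) (π/2)) := by
  rw [integrableOn_Icc_iff_integrableOn_Ioo]
  exact pendH_int

lemma pendH_ii {x y : ℝ} (hx : x ∈ Icc (-(π/2)) (π/2)) (hy : y ∈ Icc (-(π/2)) (π/2))
    (hxy : x ≤ y) : IntervalIntegrable pendH volume x y := by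
  rw [intervalIntegrable_iff_integrableOn_Ioc_of_le hxy]
  exact pendH_int_Icc.mono_set (fun z hz => ⟨le_trans hx.1 hz.1.le, le_trans hz.2 hy.2⟩)

lemma pendF_zero : pendF (-(π/2)) = 0 := intervalIntegral.integral_same

lemma pendF_one : pendF (π/2) = 1 := by
  unfold pendF
  rw [intervalIntegral.integral_of_le (by linarith [pend_half_pi_pos]),
    integral_Ioc_eq_integral_Ioo, pendH_value]

lemma pendF_cont : ContinuousOn pendF (Icc (-(π/2)) (π/2)) := by
  have h : uIcc (-(π/2)) (π/2) = Icc (-(π/2)) (π/2) :=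
    uIcc_of_le (by linarith [pend_half_pi_pos])
  have := intervalIntegral.continuousOn_primitive_interval
    (a := -(π/2)) (b := π/2) (μ := volume) (f := pendH) (by rw [h]; exact pendH_int_Icc)
  rwa [h] at this

lemma pendH_contOn : ContinuousOn pendH (Ioo (-(π/2)) (π/2)) := by
  intro x hx
  have hc : 0 < 2 * pendK * Real.cos x :=
    mul_pos (mul_pos two_pos pendK_pos) (Real.cos_pos_of_mem_Ioo hx)
  exact (((continuous_const.mul Real.continuous_cos).continuousAt).rpow_const
    (Or.inl (ne_of_gt hc))).continuousWithinAt

lemma pendF_deriv : ∀ x ∈ Ioo (-(π/2)) (π/2), HasDerivAt pendF (pendH x) x := by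
  intro x hx
  have hc : 0 < 2 * pendK * Real.cos x :=
    mul_pos (mul_pos two_pos pendK_pos) (Real.cos_pos_of_mem_Ioo hx)
  exact intervalIntegral.integral_hasDerivAt_right
    (pendH_ii (left_mem_Icc.2 (by linarith [pend_half_pi_pos])) (Ioo_subset_Icc_self hx) hx.1.le)
    (pendH_contOn.stronglyMeasurableAtFilter isOpen_Ioo x hx)
    (((continuous_const.mul Real.continuous_cos).continuousAt).rpow_const (Or.inl (ne_of_gt hc)))

lemma pendF_strictMono {x y : ℝ} (hx : x ∈ Icc (-(π/2)) (π/2)) (hy : y ∈ Icc (-(π/2)) (π/2))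
    (hxy : x < y) : pendF x < pendF y := by
  have h1 : IntervalIntegrable pendH volume (-(π/2)) x :=
    pendH_ii (left_mem_Icc.2 (by linarith [pend_half_pi_pos])) hx hx.1
  have h2 : IntervalIntegrable pendH volume x y := pendH_ii hx hy hxy.le
  have hadd := intervalIntegral.integral_add_adjacent_intervals h1 h2
  have hpos : 0 < ∫ u in x..y, pendH u := by
    refine intervalIntegral.intervalIntegral_pos_of_pos_on h2 ?_ hxy
    intro z hz
    exact pendH_pos z ⟨lt_of_le_of_lt hx.1 hz.1, lt_of_lt_of_le hz.2 hy.2⟩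
  show pendF x < pendF y
  unfold pendF
  rw [← hadd]
  linarith


/-- The pendulum released from rest at angle `-π/2` under
`X'' = -k sin X`, with the period-normalizing constant
`k = (1/2)(√π Γ(1/4)/Γ(3/4))²`, reaches the angle `π/2` with zero velocity
at time `1`. -/
theorem pendulum_half_period
    (X X' : ℝ → ℝ)
    (hX : ∀ t ∈ Icc (0:ℝ) 1, HasDerivWithinAt X (X' t) (Icc (0:ℝ) 1) t)
    (hX' : ∀ t ∈ Icc (0:ℝ) 1,
      HasDerivWithinAt X'
        (-((1 / 2) * (Real.sqrt π * Real.Gamma (1 / 4) / Real.Gamma (3 / 4)) ^ 2)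
          * Real.sin (X t))
        (Icc (0:ℝ) 1) t)
    (h0 : X 0 = -(π / 2)) (h0' : X' 0 = 0) :
    X 1 = π / 2 ∧ X' 1 = 0 := by
  have hX'' : ∀ t ∈ Icc (0:ℝ) 1,
      HasDerivWithinAt X' (-pendK * Real.sin (X t)) (Icc (0:ℝ) 1) t := hX'
  clear hX'
  have hK := pendK_pos
  have hpi2 := pend_half_pi_pos
  have h01 : (0:ℝ) ∈ Icc (0:ℝ) 1 := by norm_num
  have h11 : (1:ℝ) ∈ Icc (0:ℝ) 1 := by norm_num
  have hXcont : ContinuousOn X (Icc (0:ℝ) 1) := fun t ht => (hX t ht).continuousWithinAt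
  have hX'cont : ContinuousOn X' (Icc (0:ℝ) 1) := fun t ht => (hX'' t ht).continuousWithinAt
  -- Energy conservation
  have energy : ∀ t ∈ Icc (0:ℝ) 1, X' t ^ 2 = 2 * pendK * Real.cos (X t) := by
    have hEderiv : ∀ t ∈ Icc (0:ℝ) 1,
        HasDerivWithinAt (fun s => X' s ^ 2 - 2 * pendK * Real.cos (X s)) 0 (Icc (0:ℝ) 1) t := by
      intro t ht
      have h1 : HasDerivWithinAt (fun s => X' s ^ 2)
          (2 * X' t ^ 1 * (-pendK * Real.sin (X t))) (Icc (0:ℝ) 1) t := by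
        simpa using (hX'' t ht).fun_pow 2
      have h2 : HasDerivWithinAt (fun s => Real.cos (X s))
          (-Real.sin (X t) * X' t) (Icc (0:ℝ) 1) t :=
        (Real.hasDerivAt_cos (X t)).comp_hasDerivWithinAt t (hX t ht)
      have h3 := h1.fun_sub ((h2.const_mul (2 * pendK)))
      exact h3.congr_deriv (by ring)
    have hEcont : ContinuousOn (fun s => X' s ^ 2 - 2 * pendK * Real.cos (X s)) (Icc (0:ℝ) 1) :=
      fun t ht => (hEderiv t ht).continuousWithinAt
    have hconst := constant_of_has_deriv_right_zero hEcont (fun x hx =>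
      (hEderiv x (Ico_subset_Icc_self hx)).mono_of_mem_nhdsWithin (Icc_mem_nhdsGE_of_mem hx))
    intro t ht
    have := hconst t ht
    rw [h0', h0, Real.cos_neg, Real.cos_pi_div_two] at this
    nlinarith [this]
  -- cos (X t) is nonnegative
  have hcosnn : ∀ s ∈ Icc (0:ℝ) 1, 0 ≤ Real.cos (X s) := by
    intro s hs
    nlinarith [energy s hs, sq_nonneg (X' s)]
  -- X stays within [-π/2, π/2]
  have hrange : ∀ t ∈ Icc (0:ℝ) 1, X t ∈ Icc (-(π/2)) (π/2) := by
    intro t ht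
    have hsub : Icc (0:ℝ) t ⊆ Icc (0:ℝ) 1 := Icc_subset_Icc le_rfl ht.2
    constructor
    · by_contra hcon
      push_neg at hcon
      set v := max (X t) (-π) with hv
      have hv1 : v ∈ Icc (X t) (X 0) := by
        rw [h0]
        exact ⟨le_max_left _ _, max_le hcon.le (by linarith [Real.pi_pos])⟩
      obtain ⟨s, hs, hXs⟩ := intermediate_value_Icc' ht.1 (hXcont.mono hsub) hv1
      have hcv : Real.cos v < 0 := by
        rw [← Real.cos_neg]
        apply Real.cos_neg_of_pi_div_two_lt_of_lt
        · simp only [hv]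
          rcases max_cases (X t) (-π) with ⟨he, _⟩ | ⟨he, _⟩ <;> rw [he] <;>
            linarith [Real.pi_pos]
        · simp only [hv]
          rcases max_cases (X t) (-π) with ⟨he, hle⟩ | ⟨he, _⟩ <;> rw [he] <;>
            linarith [Real.pi_pos]
      rw [← hXs] at hcv
      exact absurd (hcosnn s (hsub hs)) (not_le.2 hcv)
    · by_contra hcon
      push_neg at hcon
      set v := min (X t) π with hv
      have hv1 : v ∈ Icc (X 0) (X t) := by
        rw [h0]
        exact ⟨le_min (by linarith) (by linarith [Real.pi_pos]), min_le_left _ _⟩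
      obtain ⟨s, hs, hXs⟩ := intermediate_value_Icc ht.1 (hXcont.mono hsub) hv1
      have hcv : Real.cos v < 0 := by
        apply Real.cos_neg_of_pi_div_two_lt_of_lt
        · simp only [hv]
          rcases min_cases (X t) π with ⟨he, _⟩ | ⟨he, _⟩ <;> rw [he] <;>
            linarith [Real.pi_pos]
        · simp only [hv]
          rcases min_cases (X t) π with ⟨he, hle⟩ | ⟨he, _⟩ <;> rw [he] <;>
            linarith [Real.pi_pos]
      rw [← hXs] at hcv
      exact absurd (hcosnn s (hsub hs)) (not_le.2 hcv)
  -- X' is positive shortly after 0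
  have hinit : ∃ δ > 0, ∀ s, s ∈ Ioc (0:ℝ) 1 → s < δ → 0 < X' s := by
    have hd0 : HasDerivWithinAt X' pendK (Icc (0:ℝ) 1) 0 := by
      have := hX'' 0 h01
      rw [h0] at this
      simpa [Real.sin_neg, Real.sin_pi_div_two] using this
    rw [hasDerivWithinAt_iff_tendsto_slope] at hd0
    have hev : ∀ᶠ s in 𝓝[Icc (0:ℝ) 1 \ {0}] 0, 0 < slope X' 0 s :=
      hd0.eventually (eventually_gt_nhds hK)
    rw [eventually_nhdsWithin_iff] at hev
    rcases Metric.eventually_nhds_iff.mp hev with ⟨δ, hδpos, hball⟩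
    refine ⟨δ, hδpos, ?_⟩
    intro s hs hsδ
    have h1 : s ∈ Icc (0:ℝ) 1 \ {0} := ⟨⟨hs.1.le, hs.2⟩, ne_of_gt hs.1⟩
    have h2 := hball (show dist s 0 < δ by
      rw [Real.dist_eq, sub_zero, abs_of_pos hs.1]; exact hsδ) h1
    rw [slope_def_field, h0'] at h2
    have h3 : 0 < X' s / s := by simpa using h2
    rcases div_pos_iff.mp h3 with ⟨h, _⟩ | ⟨_, hneg⟩
    · exact h
    · linarith [hs.1]
  obtain ⟨δ, hδpos, hδ⟩ := hinit
  -- The first return time t₁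
  set W : Set ℝ := ((Icc (0:ℝ) 1 ∩ X' ⁻¹' {0}) ∩ Ici δ) ∪ {1} with hW
  have hWclosed : IsClosed W :=
    ((hX'cont.preimage_isClosed_of_isClosed isClosed_Icc isClosed_singleton).inter
      isClosed_Ici).union isClosed_singleton
  have hWne : W.Nonempty := ⟨1, Or.inr rfl⟩
  have hWbdd : BddBelow W := ⟨0, fun w hw => by
    rcases hw with ⟨⟨hw1, _⟩, _⟩ | hw
    · exact hw1.1
    · simp only [mem_singleton_iff] at hw
      rw [hw]; norm_num⟩
  set t₁ := sInf W with ht₁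
  have ht₁W : t₁ ∈ W := hWclosed.csInf_mem hWne hWbdd
  have ht₁le1 : t₁ ≤ 1 := csInf_le hWbdd (Or.inr rfl)
  have ht₁pos : 0 < t₁ := by
    have : min δ 1 ≤ t₁ := le_csInf hWne (fun w hw => by
      rcases hw with ⟨⟨_, _⟩, hwδ⟩ | hw
      · exact le_trans (min_le_left _ _) hwδ
      · simp only [mem_singleton_iff] at hw
        rw [hw]; exact min_le_right _ _)
    calc (0:ℝ) < min δ 1 := lt_min hδpos one_pos
    _ ≤ t₁ := this
  have ht₁Icc : t₁ ∈ Icc (0:ℝ) 1 := ⟨ht₁pos.le, ht₁le1⟩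
  -- X' is positive on (0, t₁)
  have hpos : ∀ s, s ∈ Ioo 0 t₁ → 0 < X' s := by
    intro s hs
    have hs1 : s ∈ Icc (0:ℝ) 1 := ⟨hs.1.le, le_trans hs.2.le ht₁le1⟩
    by_cases hcase : s < δ
    · exact hδ s ⟨hs.1, hs1.2⟩ hcase
    · push_neg at hcase
      have hne : X' s ≠ 0 := by
        intro h0s
        have hsW : s ∈ W := Or.inl ⟨⟨hs1, h0s⟩, hcase⟩
        have := csInf_le hWbdd hsW
        linarith [hs.2]
      rcases lt_or_ge (X' s) 0 with hneg | hp
      · exfalso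
        have hp2 : 0 < δ/2 := by linarith
        have hp2s : δ/2 < s := by linarith
        have hXp : 0 < X' (δ/2) := hδ (δ/2) ⟨hp2, by linarith [hs1.2]⟩ (by linarith)
        have hsubz : Icc (δ/2) s ⊆ Icc (0:ℝ) 1 := Icc_subset_Icc hp2.le hs1.2
        obtain ⟨z, hz, hz0⟩ := intermediate_value_Icc' hp2s.le (hX'cont.mono hsubz)
          (mem_Icc.2 ⟨hneg.le, hXp.le⟩)
        have hz1 : z ∈ Icc (0:ℝ) 1 := hsubz hz
        by_cases hzδ : z < δ
        · have := hδ z ⟨lt_of_lt_of_le hp2 hz.1, hz1.2⟩ hzδ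
          rw [hz0] at this
          exact lt_irrefl 0 this
        · push_neg at hzδ
          have hzW : z ∈ W := Or.inl ⟨⟨hz1, hz0⟩, hzδ⟩
          have := csInf_le hWbdd hzW
          linarith [hz.2, hs.2]
      · exact lt_of_le_of_ne hp (Ne.symm hne)
  -- pendF ∘ X is the identity up to t₁
  have hFX : pendF (X t₁) = t₁ := by
    have hGcont : ContinuousOn (fun t => pendF (X t) - t) (Icc (0:ℝ) 1) :=
      (pendF_cont.comp hXcont hrange).sub (continuous_id.continuousOn)
    have hGderiv : ∀ t ∈ Ioo (0:ℝ) t₁,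
        HasDerivWithinAt (fun s => pendF (X s) - s) 0 (Icc (0:ℝ) 1) t := by
      intro t ht
      have ht1 : t ∈ Icc (0:ℝ) 1 := ⟨ht.1.le, le_trans ht.2.le ht₁le1⟩
      have hXpos := hpos t ht
      have hcos : 0 < Real.cos (X t) := by nlinarith [energy t ht1, hK]
      have hXin : X t ∈ Ioo (-(π/2)) (π/2) := by
        rcases hrange t ht1 with ⟨hl, hr⟩
        constructor
        · rcases eq_or_lt_of_le hl with he | he
          · exfalso
            rw [← he, Real.cos_neg, Real.cos_pi_div_two] at hcos
            exact lt_irrefl 0 hcos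
          · exact he
        · rcases eq_or_lt_of_le hr with he | he
          · exfalso
            rw [he, Real.cos_pi_div_two] at hcos
            exact lt_irrefl 0 hcos
          · exact he
      have hchain := (pendF_deriv (X t) hXin).comp_hasDerivWithinAt t (hX t ht1)
      have hval : pendH (X t) * X' t = 1 := by
        show (2 * pendK * Real.cos (X t)) ^ (-(1/2) : ℝ) * X' t = 1
        rw [← energy t ht1, pend_sqinv hXpos]
        exact inv_mul_cancel₀ (ne_of_gt hXpos)
      have hfinal := hchain.fun_sub (hasDerivWithinAt_id t (Icc (0:ℝ) 1))
      simpa [hval] using hfinal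
    have hconst : ∀ a ∈ Ioo (0:ℝ) t₁,
        pendF (X t₁) - t₁ = pendF (X a) - a := by
      intro a ha
      have hsub2 : Icc a t₁ ⊆ Icc (0:ℝ) 1 := Icc_subset_Icc ha.1.le ht₁le1
      have := constant_of_has_deriv_right_zero (f := fun s => pendF (X s) - s)
        (hGcont.mono hsub2) (fun x hx => by
          have hx' : x ∈ Ioo (0:ℝ) t₁ := ⟨lt_of_lt_of_le ha.1 hx.1, hx.2⟩
          exact (hGderiv x hx').mono_of_mem_nhdsWithin
            (Icc_mem_nhdsGE_of_mem ⟨hx'.1.le, lt_of_lt_of_le hx.2 ht₁le1⟩))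
      exact this t₁ (right_mem_Icc.2 ha.2.le)
    -- take the limit a → 0⁺
    have hG0 : pendF (X 0) - 0 = 0 := by
      rw [h0, pendF_zero]; ring
    have hclos : (0:ℝ) ∈ closure (Ioo (0:ℝ) t₁) := by
      rw [closure_Ioo (ne_of_lt ht₁pos)]
      exact ⟨le_refl 0, ht₁pos.le⟩
    have hnebot : (𝓝[Ioo (0:ℝ) t₁] (0:ℝ)).NeBot :=
      mem_closure_iff_nhdsWithin_neBot.mp hclos
    have ht1 : Tendsto (fun t => pendF (X t) - t) (𝓝[Ioo (0:ℝ) t₁] 0)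
        (𝓝 (pendF (X 0) - 0)) :=
      (hGcont 0 h01).mono_left (nhdsWithin_mono 0
        (fun z hz => ⟨hz.1.le, le_trans hz.2.le ht₁le1⟩ : Ioo (0:ℝ) t₁ ⊆ Icc (0:ℝ) 1))
    rw [hG0] at ht1
    have ht2 : Tendsto (fun t => pendF (X t) - t) (𝓝[Ioo (0:ℝ) t₁] 0)
        (𝓝 (pendF (X t₁) - t₁)) := by
      refine Tendsto.congr' ?_ tendsto_const_nhds
      filter_upwards [self_mem_nhdsWithin] with a ha
      exact hconst a ha
    have := tendsto_nhds_unique ht2 ht1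
    linarith [this]
  -- conclude
  rcases ht₁W with h | h
  · have hX't₁ : X' t₁ = 0 := h.1.2
    have hcos0 : Real.cos (X t₁) = 0 := by
      have h2 := energy t₁ ht₁Icc
      rw [hX't₁] at h2
      nlinarith [h2, hK]
    rcases hrange t₁ ht₁Icc with ⟨hl, hr⟩
    have hends : X t₁ = -(π/2) ∨ X t₁ = π/2 := by
      by_contra hc
      push_neg at hc
      have hin : X t₁ ∈ Ioo (-(π/2)) (π/2) :=
        ⟨lt_of_le_of_ne hl (Ne.symm hc.1), lt_of_le_of_ne hr hc.2⟩
      exact absurd hcos0 (ne_of_gt (Real.cos_pos_of_mem_Ioo hin))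
    rcases hends with he | he
    · exfalso
      rw [he, pendF_zero] at hFX
      linarith
    · rw [he, pendF_one] at hFX
      constructor
      · rw [show (1:ℝ) = t₁ from hFX]; exact he
      · rw [show (1:ℝ) = t₁ from hFX]; exact hX't₁
  · have ht₁1 : t₁ = 1 := h
    rw [ht₁1] at hFX
    have hX1 : X 1 = π/2 := by
      by_contra hne
      have hlt : X 1 < π/2 := lt_of_le_of_ne (hrange 1 h11).2 hne
      have := pendF_strictMono (hrange 1 h11)
        (right_mem_Icc.2 (by linarith : -(π/2) ≤ π/2)) hlt
      rw [hFX, pendF_one] at this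
      exact lt_irrefl 1 this
    refine ⟨hX1, ?_⟩
    have h2 := energy 1 h11
    rw [hX1, Real.cos_pi_div_two] at h2
    nlinarith [h2]
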